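/- Let S = (β, γ) be a standard symbol. Define ι : Z(S) → Z(S) by ι(j) = ψ(j) and ι(ψ(j)) = j for each pair (j, ψ(j)) of S, and ι(z) = z for every element z of Z(S) not belonging to any pair. Then ι is well defined (both members of every pair of S lie in Z(S) and distinct pairs are disjoint), ι is an involution of Z(S) with exactly r fixed points, and ι is r-admissible. -/

import Mathlib

namespace LM2003

open scoped BigOperators

/-- `(β, γ)` is a symbol in `Sy(n,k,r)`: two finite sets of integers contained in
`{1, …, n+1}`, of cardinalities `k+r` and `k` (rows are identified with the subsets
they enumerate; strict increase is automatic). -/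
def IsSymbol (n k r : ℕ) (β γ : Finset ℤ) : Prop :=
  β ⊆ Finset.Icc 1 ((n : ℤ) + 1) ∧ γ ⊆ Finset.Icc 1 ((n : ℤ) + 1) ∧
    β.card = k + r ∧ γ.card = k

/-- `(β,γ)` is standard: for each `i < |γ|`, the `i`-th smallest element of `β`
is `≤` the `i`-th smallest element of `γ`. -/
def IsStandard (β γ : Finset ℤ) : Prop :=
  ∀ i : ℕ, i < γ.card → (β.sort (· ≤ ·))[i]! ≤ (γ.sort (· ≤ ·))[i]!

/-- Accumulated data after level `l` of the recursive definition of `ψ`: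
the first component is `γ⁰ ∪ ⋯ ∪ γ^l` and the second is `ψ(γ⁰ ∪ ⋯ ∪ γ^l)`. -/
def psiAcc (β γ : Finset ℤ) : ℕ → Finset ℤ × Finset ℤ
  | 0 => (γ ∩ β, γ ∩ β)
  | l + 1 =>
    let p := psiAcc β γ l
    let g := (γ \ p.1).filter fun j => j - ((l : ℤ) + 1) ∈ β \ p.2
    (p.1 ∪ g, p.2 ∪ g.image fun j => j - ((l : ℤ) + 1))

/-- The level sets `γ^l` in the recursive definition of `ψ`. -/
def gammaL (β γ : Finset ℤ) : ℕ → Finset ℤ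
  | 0 => γ ∩ β
  | l + 1 =>
    (γ \ (psiAcc β γ l).1).filter fun j => j - ((l : ℤ) + 1) ∈ β \ (psiAcc β γ l).2

open Classical in
/-- The map `ψ` : for `j ∈ γ^l` it is `j ↦ j - l` (via the least such `l`),
and the identity elsewhere. -/
noncomputable def psiS (β γ : Finset ℤ) (j : ℤ) : ℤ :=
  if h : ∃ l, j ∈ gammaL β γ l then j - (Nat.find h : ℤ) else j

/-- The pairs of a (standard) symbol: the pairs `(j, ψ(j))` with `j ∈ γ` and `ψ(j) ≠ j`. -/
noncomputable def pairsS (β γ : Finset ℤ) : Finset (ℤ × ℤ) :=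
  (γ.filter fun j => psiS β γ j ≠ j).image fun j => (j, psiS β γ j)

/-- Exchanging, for every pair in `T`, the two members between the two rows of `(β,γ)`
(reordering of rows is automatic for sets). Pairs are written `(j, ψ j)` with `j` in the
bottom row `γ` and `ψ j` in the top row `β`. -/
def swapSymbol (β γ : Finset ℤ) (T : Finset (ℤ × ℤ)) : Finset ℤ × Finset ℤ :=
  ((β \ T.image Prod.snd) ∪ T.image Prod.fst,
   (γ \ T.image Prod.fst) ∪ T.image Prod.snd)

/-- The class `C(S)` of a standard symbol: all symbols obtained by permuting a subset
of its pairs. -/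
noncomputable def CSet (β γ : Finset ℤ) : Finset (Finset ℤ × Finset ℤ) :=
  (pairsS β γ).powerset.image (swapSymbol β γ)

/-- The Fock space `F(Λ)`: free `ℚ(v)`-module on the set of all symbols. -/
abbrev FF : Type := (Finset ℤ × Finset ℤ) →₀ RatFunc ℚ

/-- Standard basis vector `u_S`. -/
noncomputable def uS (S : Finset ℤ × Finset ℤ) : FF := Finsupp.single S 1

/-- The variable `v` of `K = ℚ(v)`. -/
noncomputable def vv : RatFunc ℚ := RatFunc.X

/-- Action of the Chevalley generator `f_j` on the standard basis vector `u_S`. -/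
noncomputable def fAct (j : ℤ) (S : Finset ℤ × Finset ℤ) : FF :=
  (if j ∈ S.2 ∧ j + 1 ∉ S.2 then uS (S.1, insert (j + 1) (S.2.erase j)) else 0) +
  (if j ∈ S.1 ∧ j + 1 ∉ S.1 then
      vv ^ ((if j ∈ S.2 then (1 : ℤ) else 0) - (if j + 1 ∈ S.2 then (1 : ℤ) else 0)) •
        uS (insert (j + 1) (S.1.erase j), S.2)
    else 0)

/-- The Chevalley generator `f_j` as a linear operator on `F`. -/
noncomputable def fLin (j : ℤ) : FF →ₗ[RatFunc ℚ] FF :=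
  Finsupp.lsum (RatFunc ℚ) fun S => LinearMap.toSpanSingleton (RatFunc ℚ) FF (fAct j S)

/-- Divided powers: `f_j^{(1)} = f_j`, `f_j^{(2)} = f_j² / (v + v⁻¹)`. -/
noncomputable def fDiv (j : ℤ) (m : ℕ) : FF →ₗ[RatFunc ℚ] FF :=
  if m = 2 then (vv + vv⁻¹)⁻¹ • (fLin j ∘ₗ fLin j) else fLin j

/-- `b_S = Σ_{Σ ∈ C(S)} v^{n(Σ)} u_Σ`, written as a sum over the subsets `T` of the
set of pairs of `S` (with `n(Σ) = |T|`). -/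
noncomputable def bS (β γ : Finset ℤ) : FF :=
  ∑ T ∈ (pairsS β γ).powerset, vv ^ T.card • uS (swapSymbol β γ T)

/-- `ι` is an involution of the finite set `Z`. -/
def IsInvolutionOn (Z : Finset ℤ) (ι : ℤ → ℤ) : Prop :=
  (∀ z ∈ Z, ι z ∈ Z) ∧ ∀ z ∈ Z, ι (ι z) = z

/-- `z < z'` are consecutive elements of `Z`. -/
def ConsecutiveIn (Z : Finset ℤ) (z z' : ℤ) : Prop :=
  z ∈ Z ∧ z' ∈ Z ∧ z < z' ∧ ∀ x ∈ Z, ¬(z < x ∧ x < z')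

/-- `r`-admissible involutions of a finite set `Z` of integers: `ι` is an involution of
`Z` with exactly `r` fixed points, and either `|Z| = r`, or there are two consecutive
elements `z < z'` of `Z` with `ι z = z'` whose removal again yields an `r`-admissible
involution. -/
inductive IsAdmissible (r : ℕ) : Finset ℤ → (ℤ → ℤ) → Prop
  | base (Z : Finset ℤ) (ι : ℤ → ℤ) (hinv : IsInvolutionOn Z ι)
      (hfix : (Z.filter fun z => ι z = z).card = r) (hcard : Z.card = r) :
      IsAdmissible r Z ι
  | step (Z : Finset ℤ) (ι : ℤ → ℤ) (z z' : ℤ) (hinv : IsInvolutionOn Z ι)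
      (hfix : (Z.filter fun w => ι w = w).card = r)
      (hcons : ConsecutiveIn Z z z') (hzz : ι z = z')
      (hrec : IsAdmissible r (Z \ {z, z'}) ι) :
      IsAdmissible r Z ι

/-- `c_j(S)`: number of occurrences of `j` among the entries of the symbol `(β,γ)`. -/
def contentS (β γ : Finset ℤ) (j : ℤ) : ℕ :=
  (if j ∈ β then 1 else 0) + (if j ∈ γ then 1 else 0)

section Lemmas

variable {β γ : Finset ℤ}

lemma psiAcc_succ (l : ℕ) : psiAcc β γ (l+1) =
    ((psiAcc β γ l).1 ∪ gammaL β γ (l+1),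
     (psiAcc β γ l).2 ∪ (gammaL β γ (l+1)).image fun j => j - ((l : ℤ) + 1)) := rfl

lemma mem_gammaL_succ {j : ℤ} {l : ℕ} :
    j ∈ gammaL β γ (l+1) ↔ j ∈ γ ∧ j ∉ (psiAcc β γ l).1 ∧
      (j - ((l : ℤ) + 1) ∈ β ∧ j - ((l : ℤ) + 1) ∉ (psiAcc β γ l).2) := by
  simp [gammaL, Finset.mem_filter, Finset.mem_sdiff, and_assoc]

lemma psiAcc_fst_mono {l m : ℕ} (h : l ≤ m) : (psiAcc β γ l).1 ⊆ (psiAcc β γ m).1 := by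
  induction m with
  | zero => simpa [Nat.le_zero.mp h] using Finset.Subset.refl _
  | succ m ih =>
    rcases Nat.lt_or_ge l (m+1) with h' | h'
    · exact (ih (Nat.lt_succ_iff.mp h')).trans (by rw [psiAcc_succ]; exact Finset.subset_union_left)
    · have : l = m + 1 := le_antisymm h h'
      subst this; exact Finset.Subset.refl _

lemma psiAcc_snd_mono {l m : ℕ} (h : l ≤ m) : (psiAcc β γ l).2 ⊆ (psiAcc β γ m).2 := by
  induction m with
  | zero => simpa [Nat.le_zero.mp h] using Finset.Subset.refl _
  | succ m ih =>
    rcases Nat.lt_or_ge l (m+1) with h' | h'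
    · exact (ih (Nat.lt_succ_iff.mp h')).trans (by rw [psiAcc_succ]; exact Finset.subset_union_left)
    · have : l = m + 1 := le_antisymm h h'
      subst this; exact Finset.Subset.refl _

lemma mem_psiAcc_fst_iff {j : ℤ} {t : ℕ} :
    j ∈ (psiAcc β γ t).1 ↔ ∃ s ≤ t, j ∈ gammaL β γ s := by
  induction t with
  | zero =>
    constructor
    · intro h; exact ⟨0, le_refl _, h⟩
    · rintro ⟨s, hs, h⟩; rw [Nat.le_zero.mp hs] at h; exact h
  | succ t ih =>
    rw [psiAcc_succ]
    simp only [Finset.mem_union, ih]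
    constructor
    · rintro (⟨s, hs, h⟩ | h)
      · exact ⟨s, hs.trans (Nat.le_succ t), h⟩
      · exact ⟨t+1, le_refl _, h⟩
    · rintro ⟨s, hs, h⟩
      rcases Nat.lt_or_ge s (t+1) with h' | h'
      · exact Or.inl ⟨s, Nat.lt_succ_iff.mp h', h⟩
      · have : s = t+1 := le_antisymm hs h'
        subst this; exact Or.inr h

lemma mem_psiAcc_snd_iff {b : ℤ} {t : ℕ} :
    b ∈ (psiAcc β γ t).2 ↔ ∃ s ≤ t, ∃ j ∈ gammaL β γ s, b = j - (s : ℤ) := by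
  induction t with
  | zero =>
    constructor
    · intro h; exact ⟨0, le_refl _, b, h, by simp⟩
    · rintro ⟨s, hs, j, hj, rfl⟩
      rw [Nat.le_zero.mp hs] at hj ⊢; simp only [Nat.cast_zero, sub_zero]; exact hj
  | succ t ih =>
    rw [psiAcc_succ]
    simp only [Finset.mem_union, ih, Finset.mem_image]
    constructor
    · rintro (⟨s, hs, j, hj, rfl⟩ | ⟨j, hj, rfl⟩)
      · exact ⟨s, hs.trans (Nat.le_succ t), j, hj, rfl⟩
      · exact ⟨t+1, le_refl _, j, hj, by push_cast; ring⟩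
    · rintro ⟨s, hs, j, hj, rfl⟩
      rcases Nat.lt_or_ge s (t+1) with h' | h'
      · exact Or.inl ⟨s, Nat.lt_succ_iff.mp h', j, hj, rfl⟩
      · have : s = t+1 := le_antisymm hs h'
        subst this
        exact Or.inr ⟨j, hj, by push_cast; ring⟩

lemma gammaL_subset_gamma {s : ℕ} : gammaL β γ s ⊆ γ := by
  cases s with
  | zero => exact Finset.inter_subset_left
  | succ s => exact fun j hj => (Finset.mem_sdiff.mp (Finset.mem_of_mem_filter j hj)).1

lemma mem_gammaL_sub_mem_beta {j : ℤ} {s : ℕ} (h : j ∈ gammaL β γ s) : j - (s : ℤ) ∈ β := by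
  cases s with
  | zero => simpa using (Finset.mem_inter.mp h).2
  | succ s =>
    have := (mem_gammaL_succ.mp h).2.2.1
    convert this using 2; exact Nat.cast_succ s

lemma mem_gammaL_mem_fst {j : ℤ} {s : ℕ} (h : j ∈ gammaL β γ s) : j ∈ (psiAcc β γ s).1 :=
  mem_psiAcc_fst_iff.mpr ⟨s, le_refl _, h⟩

lemma level_unique {j : ℤ} {s t : ℕ} (hs : j ∈ gammaL β γ s) (ht : j ∈ gammaL β γ t) :
    s = t := by
  by_contra hne
  wlog hlt : s < t generalizing s t
  · exact this ht hs (Ne.symm hne) (by omega)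
  obtain ⟨t', rfl⟩ : ∃ t', t = t' + 1 := ⟨t - 1, by omega⟩
  exact (mem_gammaL_succ.mp ht).2.1
    (psiAcc_fst_mono (by omega) (mem_gammaL_mem_fst hs))

lemma not_mem_fst_of_level {j : ℤ} {s t : ℕ} (hs : j ∈ gammaL β γ s) (h : t < s) :
    j ∉ (psiAcc β γ t).1 := by
  intro hmem
  obtain ⟨s', hs', hmem'⟩ := mem_psiAcc_fst_iff.mp hmem
  have := level_unique hmem' hs
  omega

lemma sub_level_inj {j j' : ℤ} {s s' : ℕ} (hj : j ∈ gammaL β γ s) (hj' : j' ∈ gammaL β γ s')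
    (heq : j - (s : ℤ) = j' - (s' : ℤ)) : j = j' ∧ s = s' := by
  by_cases hss : s = s'
  · subst hss; exact ⟨by omega, rfl⟩
  · exfalso
    wlog hlt : s < s' generalizing j j' s s'
    · exact this hj' hj heq.symm (Ne.symm hss) (by omega)
    obtain ⟨t, rfl⟩ : ∃ t, s' = t + 1 := ⟨s' - 1, by omega⟩
    have hav := (mem_gammaL_succ.mp hj').2.2.2
    have : j - (s : ℤ) ∈ (psiAcc β γ t).2 :=
      psiAcc_snd_mono (show s ≤ t by omega) (mem_psiAcc_snd_iff.mpr ⟨s, le_refl _, j, hj, rfl⟩)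
    rw [heq] at this
    exact hav (by convert this using 2; exact (Nat.cast_succ t).symm)

lemma psiS_eq_of_mem {j : ℤ} {l : ℕ} (hl : j ∈ gammaL β γ l) : psiS β γ j = j - (l : ℤ) := by
  have h : ∃ l, j ∈ gammaL β γ l := ⟨l, hl⟩
  rw [psiS, dif_pos h]
  have := level_unique (Nat.find_spec h) hl
  rw [this]

lemma psiS_eq_self {j : ℤ} (h : ¬ ∃ l, j ∈ gammaL β γ l) : psiS β γ j = j := by
  rw [psiS, dif_neg h]

lemma inter_subset_snd {t : ℕ} : γ ∩ β ⊆ (psiAcc β γ t).2 :=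
  (show γ ∩ β ⊆ (psiAcc β γ 0).2 from Finset.Subset.refl _).trans (psiAcc_snd_mono (Nat.zero_le t))

lemma mem_gammaL_pos_props {j : ℤ} {l : ℕ} (hl : j ∈ gammaL β γ (l+1)) :
    j ∈ γ \ β ∧ j - ((l : ℤ) + 1) ∈ β \ γ := by
  obtain ⟨hγ, hn1, hb, hn2⟩ := mem_gammaL_succ.mp hl
  refine ⟨Finset.mem_sdiff.mpr ⟨hγ, fun hβ => ?_⟩, Finset.mem_sdiff.mpr ⟨hb, fun hγ' => ?_⟩⟩
  · exact hn1 (psiAcc_fst_mono (Nat.zero_le l) (Finset.mem_inter.mpr ⟨hγ, hβ⟩))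
  · exact hn2 (inter_subset_snd (Finset.mem_inter.mpr ⟨hγ', hb⟩))

lemma psiS_injOn {j j' : ℤ} {s s' : ℕ} (hj : j ∈ gammaL β γ s) (hj' : j' ∈ gammaL β γ s')
    (heq : psiS β γ j = psiS β γ j') : j = j' := by
  rw [psiS_eq_of_mem hj, psiS_eq_of_mem hj'] at heq
  exact (sub_level_inj hj hj' heq).1

end Lemmas

section SortCount

open Finset

lemma sortNth_mem (s : Finset ℤ) {i : ℕ} (h : i < s.card) :
    (s.sort (· ≤ ·))[i]! ∈ s := by
  have hlen : i < (s.sort (· ≤ ·)).length := by rwa [Finset.length_sort]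
  rw [getElem!_pos (s.sort (· ≤ ·)) i hlen]
  exact Finset.mem_sort _ |>.mp (List.getElem_mem hlen)

lemma sortNth_mono (s : Finset ℤ) {i j : ℕ} (hij : i ≤ j) (h : j < s.card) :
    (s.sort (· ≤ ·))[i]! ≤ (s.sort (· ≤ ·))[j]! := by
  have hlenj : j < (s.sort (· ≤ ·)).length := by rwa [Finset.length_sort]
  have hleni : i < (s.sort (· ≤ ·)).length := lt_of_le_of_lt (by omega) hlenj
  rw [getElem!_pos (s.sort (· ≤ ·)) i hleni, getElem!_pos (s.sort (· ≤ ·)) j hlenj]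
  have := (s.pairwise_sort (· ≤ ·)).rel_get_of_le (a := ⟨i, hleni⟩) (b := ⟨j, hlenj⟩) hij
  simpa [List.get_eq_getElem] using this

lemma card_filter_le_of_sortNth_le {s : Finset ℤ} {i : ℕ} {x : ℤ} (h : i < s.card)
    (hle : (s.sort (· ≤ ·))[i]! ≤ x) :
    i + 1 ≤ (s.filter (· ≤ x)).card := by
  have := Finset.card_le_card_of_injOn (fun m => (s.sort (· ≤ ·))[m]!)
    (s := Finset.range (i+1)) (t := s.filter (· ≤ x)) ?_ ?_
  · simpa using this
  · intro m hm
    have hm' : m ≤ i := by simpa [Nat.lt_succ_iff] using hm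
    exact Finset.mem_filter.mpr ⟨sortNth_mem s (lt_of_le_of_lt hm' h),
      le_trans (sortNth_mono s hm' h) hle⟩
  · intro m hm m' hm' heq
    simp only [Finset.coe_range, Set.mem_Iio] at hm hm'
    have hml : m < (s.sort (· ≤ ·)).length := by rw [Finset.length_sort]; omega
    have hml' : m' < (s.sort (· ≤ ·)).length := by rw [Finset.length_sort]; omega
    simp only at heq
    rw [getElem!_pos (s.sort (· ≤ ·)) m hml, getElem!_pos (s.sort (· ≤ ·)) m' hml'] at heq
    exact (s.sort_nodup (· ≤ ·)).getElem_inj_iff.mp heq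

lemma sortNth_le_of_card_filter {s : Finset ℤ} {i : ℕ} {x : ℤ} (h : i < s.card)
    (hc : i + 1 ≤ (s.filter (· ≤ x)).card) :
    (s.sort (· ≤ ·))[i]! ≤ x := by
  by_contra hgt
  push_neg at hgt
  have key : (s.filter (· ≤ x)).card ≤ i := by
    have := Finset.card_le_card_of_injOn (fun y => (s.sort (· ≤ ·)).idxOf y)
      (s := s.filter (· ≤ x)) (t := Finset.range i) ?_ ?_
    · simpa using this
    · intro y hy
      obtain ⟨hys, hyx⟩ := Finset.mem_filter.mp hy
      have hmem : y ∈ s.sort (· ≤ ·) := (Finset.mem_sort _).mpr hys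
      have hidx : (s.sort (· ≤ ·)).idxOf y < (s.sort (· ≤ ·)).length :=
        List.idxOf_lt_length_iff.mpr hmem
      have hval : (s.sort (· ≤ ·))[(s.sort (· ≤ ·)).idxOf y]! = y := by
        rw [getElem!_pos (s.sort (· ≤ ·)) _ hidx]; exact List.getElem_idxOf hidx
      refine Finset.mem_range.mpr ?_
      by_contra hge
      push_neg at hge
      have : (s.sort (· ≤ ·))[i]! ≤ (s.sort (· ≤ ·))[(s.sort (· ≤ ·)).idxOf y]! :=
        sortNth_mono s hge (by rwa [← Finset.length_sort (· ≤ ·)])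
      rw [hval] at this
      omega
    · intro y hy y' hy' heq
      obtain ⟨hys, _⟩ := Finset.mem_filter.mp hy
      obtain ⟨hys', _⟩ := Finset.mem_filter.mp hy'
      have h1 : (s.sort (· ≤ ·)).idxOf y < (s.sort (· ≤ ·)).length :=
        List.idxOf_lt_length_iff.mpr ((Finset.mem_sort _).mpr hys)
      have h2 : (s.sort (· ≤ ·)).idxOf y' < (s.sort (· ≤ ·)).length :=
        List.idxOf_lt_length_iff.mpr ((Finset.mem_sort _).mpr hys')
      have heq' : (s.sort (· ≤ ·)).idxOf y = (s.sort (· ≤ ·)).idxOf y' := heq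
      have e1 := List.getElem_idxOf h1
      have e2 := List.getElem_idxOf h2
      rw [← e1, ← e2]
      congr 1
  omega

end SortCount

section Hall

variable {β γ : Finset ℤ}

lemma hall_count (hstd : IsStandard β γ) (hcard : γ.card ≤ β.card) (x : ℤ) :
    (γ.filter (· ≤ x)).card ≤ (β.filter (· ≤ x)).card := by
  set c := (γ.filter (· ≤ x)).card with hc
  rcases Nat.eq_zero_or_pos c with h0 | hpos
  · omega
  have hcle : c ≤ γ.card := Finset.card_le_card (Finset.filter_subset _ _)
  have hi : c - 1 < γ.card := by omega
  have h1 : (γ.sort (· ≤ ·))[c-1]! ≤ x :=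
    sortNth_le_of_card_filter hi (by omega)
  have h2 : (β.sort (· ≤ ·))[c-1]! ≤ x := le_trans (hstd (c-1) hi) h1
  have := card_filter_le_of_sortNth_le (s := β) (i := c-1) (by omega) h2
  omega

lemma never_matched_invariant {j : ℤ} (hnever : ∀ l, j ∉ gammaL β γ l) (hj : j ∈ γ) :
    ∀ l : ℕ, ∀ b ∈ β, j - (l : ℤ) ≤ b → b ≤ j → b ∈ (psiAcc β γ l).2 := by
  intro l
  induction l with
  | zero =>
    intro b hb h1 h2
    have : b = j := by omega
    subst this
    exact absurd (Finset.mem_inter.mpr ⟨hj, hb⟩) (hnever 0)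
  | succ l ih =>
    intro b hb h1 h2
    rcases le_or_gt (j - (l : ℤ)) b with h' | h'
    · exact psiAcc_snd_mono (Nat.le_succ l) (ih b hb h' h2)
    · have hbe : b = j - ((l : ℤ) + 1) := by push_cast at h1; omega
      have hne := hnever (l+1)
      rw [mem_gammaL_succ] at hne
      push_neg at hne
      have hfst : j ∉ (psiAcc β γ l).1 := by
        rw [mem_psiAcc_fst_iff]
        rintro ⟨s, _, hs⟩
        exact hnever s hs
      have := hne hj hfst (by rwa [← hbe])
      rw [← hbe] at this
      exact psiAcc_snd_mono (Nat.le_succ l) this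
      
lemma never_matched_gt {j : ℤ} (hnever : ∀ l, j ∉ gammaL β γ l) (hj : j ∈ γ)
    {j' : ℤ} {s : ℕ} (hj' : j' ∈ gammaL β γ s) (hlt : j < j') : j < j' - (s : ℤ) := by
  by_contra hle
  push_neg at hle
  have hbmem : j' - (s : ℤ) ∈ β := mem_gammaL_sub_mem_beta hj'
  rcases eq_or_lt_of_le hle with heq | hlt2
  · rw [heq] at hbmem
    exact hnever 0 (Finset.mem_inter.mpr ⟨hj, hbmem⟩)
  · -- j' - s < j
    obtain ⟨m₀, hmz⟩ : ∃ m₀ : ℕ, ((m₀ : ℤ) + 1) = j - (j' - (s : ℤ)) :=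
      ⟨(j - (j' - (s : ℤ))).toNat - 1, by omega⟩
    have hms : ((m₀ : ℤ) + 1) < (s : ℤ) := by omega
    have hne := hnever (m₀+1)
    rw [mem_gammaL_succ] at hne
    push_neg at hne
    have hfst : j ∉ (psiAcc β γ m₀).1 := by
      rw [mem_psiAcc_fst_iff]
      rintro ⟨s', _, hs'⟩
      exact hnever s' hs'
    have hb' : j - ((m₀ : ℤ) + 1) ∈ β := by
      have : j - ((m₀ : ℤ) + 1) = j' - (s : ℤ) := by push_cast at hmz; omega
      rwa [this]
    have hmem2 := hne hj hfst hb'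
    have : j - ((m₀ : ℤ) + 1) = j' - (s : ℤ) := by push_cast at hmz; omega
    rw [this] at hmem2
    obtain ⟨s'', hs'', j'', hj'', heq''⟩ := mem_psiAcc_snd_iff.mp hmem2
    obtain ⟨rfl, rfl⟩ := sub_level_inj hj'' hj' heq''.symm
    omega

lemma totality (hstd : IsStandard β γ) (hcard : γ.card ≤ β.card)
    (hβpos : ∀ b ∈ β, 1 ≤ b) {N : ℕ} (hub : ∀ g ∈ γ, g ≤ (N : ℤ)) :
    ∀ j ∈ γ, ∃ l, j ∈ gammaL β γ l := by
  intro j hj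
  by_contra hnever
  push_neg at hnever
  -- all β elements ≤ j are used at stage N
  have hused : ∀ b ∈ β, b ≤ j → b ∈ (psiAcc β γ N).2 := by
    intro b hb hble
    refine never_matched_invariant hnever hj N b hb ?_ hble
    have := hβpos b hb
    have := hub j hj
    omega
  set A := (psiAcc β γ N).1.filter (fun j' => psiS β γ j' ≤ j) with hA
  have hsub1 : β.filter (· ≤ j) ⊆ A.image (psiS β γ) := by
    intro b hb
    obtain ⟨hbβ, hbj⟩ := Finset.mem_filter.mp hb
    obtain ⟨s, hsN, j', hj', rfl⟩ := mem_psiAcc_snd_iff.mp (hused b hbβ hbj)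
    refine Finset.mem_image.mpr ⟨j', Finset.mem_filter.mpr ⟨mem_psiAcc_fst_iff.mpr ⟨s, hsN, hj'⟩, ?_⟩, psiS_eq_of_mem hj'⟩
    rw [psiS_eq_of_mem hj']
    exact hbj
  have hsub2 : A ⊆ γ.filter (· < j) := by
    intro j' hj'
    obtain ⟨hj'P, hj'le⟩ := Finset.mem_filter.mp hj'
    obtain ⟨s, _, hjs⟩ := mem_psiAcc_fst_iff.mp hj'P
    have hj'γ : j' ∈ γ := gammaL_subset_gamma hjs
    refine Finset.mem_filter.mpr ⟨hj'γ, ?_⟩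
    rcases lt_trichotomy j' j with h | h | h
    · exact h
    · exact absurd (h ▸ hjs) (hnever s)
    · rw [psiS_eq_of_mem hjs] at hj'le
      have := never_matched_gt hnever hj hjs h
      omega
  have hc1 : (β.filter (· ≤ j)).card ≤ A.card :=
    le_trans (Finset.card_le_card hsub1) (Finset.card_image_le)
  have hc2 : A.card ≤ (γ.filter (· < j)).card := Finset.card_le_card hsub2
  have hc3 : (γ.filter (· < j)).card < (γ.filter (· ≤ j)).card := by
    apply Finset.card_lt_card
    constructor
    · intro y hy
      obtain ⟨h1, h2⟩ := Finset.mem_filter.mp hy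
      exact Finset.mem_filter.mpr ⟨h1, le_of_lt h2⟩
    · intro hcon
      have := hcon (Finset.mem_filter.mpr ⟨hj, le_refl j⟩)
      simp at this
  have := hall_count hstd hcard j
  omega

end Hall

section Adm

lemma admissible_of_nested (r : ℕ) (Z : Finset ℤ) : ∀ (ι : ℤ → ℤ),
    IsInvolutionOn Z ι → ((Z.filter fun z => ι z = z).card = r) →
    (∀ z ∈ Z, z < ι z → ∀ x ∈ Z, z < x → x < ι z → z < ι x ∧ ι x < ι z ∧ ι x ≠ x) →
    IsAdmissible r Z ι := by
  induction Z using Finset.strongInduction with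
  | _ Z ih =>
    intro ι hinv hfix hnest
    by_cases hallfix : ∀ z ∈ Z, ι z = z
    · refine IsAdmissible.base Z ι hinv hfix ?_
      rw [← hfix, Finset.filter_true_of_mem hallfix]
    · push_neg at hallfix
      have hPne : (Z.filter fun z => z < ι z).Nonempty := by
        obtain ⟨w, hw, hwne⟩ := hallfix
        rcases lt_or_gt_of_ne hwne.symm with h | h
        · exact ⟨w, Finset.mem_filter.mpr ⟨hw, h⟩⟩
        · refine ⟨ι w, Finset.mem_filter.mpr ⟨hinv.1 w hw, ?_⟩⟩
          rw [hinv.2 w hw]; exact h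
      obtain ⟨z, hzmem, hzmin⟩ := Finset.exists_min_image _ (fun z => ι z - z) hPne
      obtain ⟨hzZ, hzlt⟩ := Finset.mem_filter.mp hzmem
      set z' := ι z with hz'
      have hz'Z : z' ∈ Z := hinv.1 z hzZ
      have hιz' : ι z' = z := hinv.2 z hzZ
      have hcons : ConsecutiveIn Z z z' := by
        refine ⟨hzZ, hz'Z, hzlt, ?_⟩
        rintro x hxZ ⟨h1, h2⟩
        obtain ⟨h3, h4, h5⟩ := hnest z hzZ hzlt x hxZ h1 h2
        rcases lt_trichotomy x (ι x) with h | h | h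
        · have hxP : x ∈ Z.filter fun z => z < ι z := Finset.mem_filter.mpr ⟨hxZ, h⟩
          have := hzmin x hxP
          omega
        · exact h5 h.symm
        · have hyZ : ι x ∈ Z := hinv.1 x hxZ
          have hyP : ι x ∈ Z.filter fun z => z < ι z := by
            refine Finset.mem_filter.mpr ⟨hyZ, ?_⟩
            rw [hinv.2 x hxZ]; exact h
          have := hzmin _ hyP
          rw [hinv.2 x hxZ] at this
          omega
      have hstep : ∀ x ∈ Z \ {z, z'}, ι x ∈ Z \ {z, z'} := by
        intro x hx
        obtain ⟨hxZ, hxne⟩ := Finset.mem_sdiff.mp hx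
        simp only [Finset.mem_insert, Finset.mem_singleton] at hxne
        push_neg at hxne
        refine Finset.mem_sdiff.mpr ⟨hinv.1 x hxZ, ?_⟩
        simp only [Finset.mem_insert, Finset.mem_singleton]
        push_neg
        constructor
        · intro hcon
          apply hxne.2
          rw [← hinv.2 x hxZ, hcon]
        · intro hcon
          apply hxne.1
          rw [← hinv.2 x hxZ, hcon, hιz']
      have hfilter_eq : (Z \ {z, z'}).filter (fun w => ι w = w) = Z.filter (fun w => ι w = w) := by
        ext w
        simp only [Finset.mem_filter, Finset.mem_sdiff, Finset.mem_insert, Finset.mem_singleton]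
        constructor
        · rintro ⟨⟨h1, _⟩, h2⟩; exact ⟨h1, h2⟩
        · rintro ⟨h1, h2⟩
          refine ⟨⟨h1, ?_⟩, h2⟩
          push_neg
          constructor
          · rintro rfl; omega
          · rintro rfl; rw [hιz'] at h2; omega
      refine IsAdmissible.step Z ι z z' hinv hfix hcons rfl ?_
      refine ih (Z \ {z, z'}) ?_ ι ⟨hstep, fun x hx => hinv.2 x (Finset.mem_sdiff.mp hx).1⟩ ?_ ?_
      · refine Finset.sdiff_ssubset ?_ ?_
        · intro y hy
          simp only [Finset.mem_insert, Finset.mem_singleton] at hy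
          rcases hy with rfl | rfl
          · exact hzZ
          · exact hz'Z
        · exact ⟨z, Finset.mem_insert_self _ _⟩
      · rw [hfilter_eq]; exact hfix
      · intro a ha hlt x hx h1 h2
        exact hnest a (Finset.mem_sdiff.mp ha).1 hlt x (Finset.mem_sdiff.mp hx).1 h1 h2

end Adm

open Classical in
noncomputable def iotaS (β γ : Finset ℤ) (z : ℤ) : ℤ :=
  if z ∈ γ \ β then psiS β γ z
  else if h : ∃ j ∈ γ \ β, psiS β γ j = z then h.choose else z

section Iota

variable {β γ : Finset ℤ}

lemma psi_bundle (htot : ∀ j ∈ γ, ∃ l, j ∈ gammaL β γ l) {g : ℤ} (hg : g ∈ γ \ β) :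
    psiS β γ g ∈ β \ γ ∧ psiS β γ g < g ∧
      ∃ l, g ∈ gammaL β γ (l+1) ∧ psiS β γ g = g - ((l : ℤ) + 1) := by
  obtain ⟨l, hl⟩ := htot g (Finset.mem_sdiff.mp hg).1
  obtain ⟨l₀, rfl⟩ : ∃ l₀, l = l₀ + 1 := by
    rcases Nat.eq_zero_or_pos l with rfl | hpos
    · exact absurd ((Finset.mem_inter.mp hl).2) (Finset.mem_sdiff.mp hg).2
    · exact ⟨l - 1, by omega⟩
  have hprops := (mem_gammaL_pos_props hl).2
  have hpsi := psiS_eq_of_mem hl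
  have hpsi' : psiS β γ g = g - ((l₀ : ℤ) + 1) := by rw [hpsi]; push_cast; ring
  refine ⟨by rw [hpsi']; exact hprops, by rw [hpsi']; omega, l₀, hl, hpsi'⟩

lemma psi_inj_gamma (htot : ∀ j ∈ γ, ∃ l, j ∈ gammaL β γ l) {g g' : ℤ}
    (hg : g ∈ γ) (hg' : g' ∈ γ) (heq : psiS β γ g = psiS β γ g') : g = g' := by
  obtain ⟨l, hl⟩ := htot g hg
  obtain ⟨l', hl'⟩ := htot g' hg'
  exact psiS_injOn hl hl' heq

lemma iota_gamma {g : ℤ} (hg : g ∈ γ \ β) : iotaS β γ g = psiS β γ g := by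
  rw [iotaS, if_pos hg]

lemma iota_psi (htot : ∀ j ∈ γ, ∃ l, j ∈ gammaL β γ l) {g : ℤ} (hg : g ∈ γ \ β) :
    iotaS β γ (psiS β γ g) = g := by
  obtain ⟨hmem, _, _⟩ := psi_bundle htot hg
  have hnot : psiS β γ g ∉ γ \ β := by
    intro hcon
    exact (Finset.mem_sdiff.mp hcon).2 (Finset.mem_sdiff.mp hmem).1
  have h : ∃ j ∈ γ \ β, psiS β γ j = psiS β γ g := ⟨g, hg, rfl⟩
  rw [iotaS, if_neg hnot, dif_pos h]
  obtain ⟨hc1, hc2⟩ := h.choose_spec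
  exact psi_inj_gamma htot (Finset.mem_sdiff.mp hc1).1 (Finset.mem_sdiff.mp hg).1 hc2

lemma iota_fixed {z : ℤ} (hz : z ∉ γ \ β) (hz2 : ¬ ∃ j ∈ γ \ β, psiS β γ j = z) :
    iotaS β γ z = z := by
  rw [iotaS, if_neg hz, dif_neg hz2]

lemma no_crossing {g1 g2 : ℤ} {l1 l2 : ℕ} (h1 : g1 ∈ gammaL β γ l1) (h2 : g2 ∈ gammaL β γ l2)
    (hg : g1 < g2) (hb1 : g1 - (l1 : ℤ) < g2 - (l2 : ℤ)) (hb2 : g2 - (l2 : ℤ) < g1) : False := by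
  obtain ⟨m₀, hmz⟩ : ∃ m₀ : ℕ, ((m₀ : ℤ) + 1) = g1 - (g2 - (l2 : ℤ)) :=
    ⟨(g1 - (g2 - (l2 : ℤ))).toNat - 1, by omega⟩
  have hml1 : m₀ + 1 < l1 := by omega
  have hnotm : g1 ∉ gammaL β γ (m₀ + 1) := fun hcon => by
    have := level_unique h1 hcon; omega
  have hfst : g1 ∉ (psiAcc β γ m₀).1 := not_mem_fst_of_level h1 (by omega)
  have hγ1 : g1 ∈ γ := gammaL_subset_gamma h1
  rw [mem_gammaL_succ] at hnotm
  push_neg at hnotm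
  have hbeq : g1 - ((m₀ : ℤ) + 1) = g2 - (l2 : ℤ) := by omega
  have hbβ : g1 - ((m₀ : ℤ) + 1) ∈ β := by rw [hbeq]; exact mem_gammaL_sub_mem_beta h2
  have hused := hnotm hγ1 hfst hbβ
  rw [hbeq] at hused
  obtain ⟨s, hs, j, hj, heq⟩ := mem_psiAcc_snd_iff.mp hused
  obtain ⟨rfl, rfl⟩ := sub_level_inj hj h2 heq.symm
  omega

lemma inner_beta {j x : ℤ} {lj : ℕ} (hj : j ∈ gammaL β γ lj) (hx : x ∈ β) (hxγ : x ∉ γ)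
    (h1 : j - (lj : ℤ) < x) (h2 : x < j) :
    ∃ g s, g ∈ gammaL β γ (s + 1) ∧ x = g - ((s : ℤ) + 1) ∧ g < j := by
  obtain ⟨m₀, hmz⟩ : ∃ m₀ : ℕ, ((m₀ : ℤ) + 1) = j - x := ⟨(j - x).toNat - 1, by omega⟩
  have hml : m₀ + 1 < lj := by omega
  have hfst : j ∉ (psiAcc β γ m₀).1 := not_mem_fst_of_level hj (by omega)
  have hγj : j ∈ γ := gammaL_subset_gamma hj
  have hnotm : j ∉ gammaL β γ (m₀ + 1) := fun hcon => by
    have := level_unique hj hcon; omega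
  rw [mem_gammaL_succ] at hnotm
  push_neg at hnotm
  have hbeq : j - ((m₀ : ℤ) + 1) = x := by omega
  have hused := hnotm hγj hfst (by rwa [hbeq])
  rw [hbeq] at hused
  obtain ⟨s, hs, g, hg, heq⟩ := mem_psiAcc_snd_iff.mp hused
  obtain ⟨s₀, rfl⟩ : ∃ s₀, s = s₀ + 1 := by
    rcases Nat.eq_zero_or_pos s with rfl | hpos
    · exfalso; apply hxγ
      simp only [Nat.cast_zero, sub_zero] at heq
      rw [heq]; exact (Finset.mem_inter.mp hg).1
    · exact ⟨s - 1, by omega⟩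
  refine ⟨g, s₀, hg, by push_cast at heq ⊢; omega, by omega⟩

end Iota

/-- Lemma 4.1 (a): for a standard symbol `S`, the pairs of `S` have both
members in `Z(S)`, distinct pairs are disjoint, and the involution `ι` of `Z(S)` whose
nontrivial orbits are the pairs of `S` is an involution of `Z(S)` with exactly `r`
fixed points, and is `r`-admissible. -/
theorem statement7 (n k r : ℕ) (hn : 2 ≤ n) (hk : 1 ≤ k) (hkr : k + r ≤ n)
    (β γ : Finset ℤ) (hS : IsSymbol n k r β γ) (hstd : IsStandard β γ) :
    (∀ p ∈ pairsS β γ, p.1 ∈ (β ∪ γ) \ (β ∩ γ) ∧ p.2 ∈ (β ∪ γ) \ (β ∩ γ)) ∧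
    (∀ p ∈ pairsS β γ, ∀ q ∈ pairsS β γ, p ≠ q →
        p.1 ≠ q.1 ∧ p.1 ≠ q.2 ∧ p.2 ≠ q.1 ∧ p.2 ≠ q.2) ∧
    ∃ ι : ℤ → ℤ,
      (∀ p ∈ pairsS β γ, ι p.1 = p.2 ∧ ι p.2 = p.1) ∧
      (∀ z ∈ (β ∪ γ) \ (β ∩ γ), (∀ p ∈ pairsS β γ, z ≠ p.1 ∧ z ≠ p.2) → ι z = z) ∧
      IsInvolutionOn ((β ∪ γ) \ (β ∩ γ)) ι ∧
      (((β ∪ γ) \ (β ∩ γ)).filter fun z => ι z = z).card = r ∧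
      IsAdmissible r ((β ∪ γ) \ (β ∩ γ)) ι := by
  obtain ⟨hβsub, hγsub, hβcard, hγcard⟩ := hS
  have hcardle : γ.card ≤ β.card := by omega
  have hβpos : ∀ b ∈ β, 1 ≤ b := fun b hb => (Finset.mem_Icc.mp (hβsub hb)).1
  have hub : ∀ g ∈ γ, g ≤ ((n + 1 : ℕ) : ℤ) := by
    intro g hg
    have := (Finset.mem_Icc.mp (hγsub hg)).2
    push_cast
    omega
  have htot : ∀ j ∈ γ, ∃ l, j ∈ gammaL β γ l := totality hstd hcardle hβpos hub
  have hZmem : ∀ z : ℤ, z ∈ (β ∪ γ) \ (β ∩ γ) ↔ (z ∈ β \ γ ∨ z ∈ γ \ β) := by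
    intro z
    simp only [Finset.mem_sdiff, Finset.mem_union, Finset.mem_inter]
    tauto
  -- pair representation
  have hrep : ∀ j ∈ γ, psiS β γ j ≠ j → j ∈ γ \ β := by
    intro j hjγ hjne
    refine Finset.mem_sdiff.mpr ⟨hjγ, fun hjβ => ?_⟩
    have hl0 : j ∈ gammaL β γ 0 := Finset.mem_inter.mpr ⟨hjγ, hjβ⟩
    have := psiS_eq_of_mem hl0
    simp at this
    exact hjne this
  have hpairmem : ∀ p ∈ pairsS β γ, p.1 ∈ γ \ β ∧ p.2 = psiS β γ p.1 ∧ p.2 ∈ β \ γ ∧ p.2 < p.1 := by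
    intro p hp
    obtain ⟨j, hj, rfl⟩ := Finset.mem_image.mp hp
    obtain ⟨hjγ, hjne⟩ := Finset.mem_filter.mp hj
    have hjγβ : j ∈ γ \ β := hrep j hjγ hjne
    obtain ⟨h1, h2, _⟩ := psi_bundle htot hjγβ
    exact ⟨hjγβ, rfl, h1, h2⟩
  have hγβpair : ∀ g ∈ γ \ β, (g, psiS β γ g) ∈ pairsS β γ := by
    intro g hg
    obtain ⟨_, hlt, _⟩ := psi_bundle htot hg
    exact Finset.mem_image.mpr ⟨g, Finset.mem_filter.mpr
      ⟨(Finset.mem_sdiff.mp hg).1, by omega⟩, rfl⟩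
  have hinv : IsInvolutionOn ((β ∪ γ) \ (β ∩ γ)) (iotaS β γ) := by
    constructor
    · intro z hzZ
      rcases (hZmem z).mp hzZ with hzb | hzg
      · by_cases hex : ∃ g ∈ γ \ β, psiS β γ g = z
        · obtain ⟨g, hg, hψ⟩ := hex
          rw [← hψ, iota_psi htot hg]
          exact (hZmem g).mpr (Or.inr hg)
        · rw [iota_fixed (fun hc => (Finset.mem_sdiff.mp hc).2 (Finset.mem_sdiff.mp hzb).1) hex]
          exact hzZ
      · rw [iota_gamma hzg]
        exact (hZmem _).mpr (Or.inl (psi_bundle htot hzg).1)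
    · intro z hzZ
      rcases (hZmem z).mp hzZ with hzb | hzg
      · by_cases hex : ∃ g ∈ γ \ β, psiS β γ g = z
        · obtain ⟨g, hg, hψ⟩ := hex
          rw [← hψ, iota_psi htot hg, iota_gamma hg]
        · rw [iota_fixed (fun hc => (Finset.mem_sdiff.mp hc).2 (Finset.mem_sdiff.mp hzb).1) hex,
            iota_fixed (fun hc => (Finset.mem_sdiff.mp hc).2 (Finset.mem_sdiff.mp hzb).1) hex]
      · rw [iota_gamma hzg, iota_psi htot hzg]
  have hcount : (((β ∪ γ) \ (β ∩ γ)).filter fun z => iotaS β γ z = z).card = r := by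
    have hIsub : (γ \ β).image (psiS β γ) ⊆ β \ γ := by
      intro b hb
      obtain ⟨g, hg, rfl⟩ := Finset.mem_image.mp hb
      exact (psi_bundle htot hg).1
    have hIcard : ((γ \ β).image (psiS β γ)).card = (γ \ β).card :=
      Finset.card_image_of_injOn (fun g hg g' hg' heq =>
        psi_inj_gamma htot (Finset.mem_sdiff.mp (by exact_mod_cast hg)).1
          (Finset.mem_sdiff.mp (by exact_mod_cast hg')).1 heq)
    have hFeq : ((β ∪ γ) \ (β ∩ γ)).filter (fun z => iotaS β γ z = z) =
        (β \ γ) \ (γ \ β).image (psiS β γ) := by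
      ext z
      simp only [Finset.mem_filter, Finset.mem_sdiff]
      constructor
      · rintro ⟨hzZ, hfix⟩
        rcases (hZmem z).mp (Finset.mem_sdiff.mpr hzZ) with hzb | hzg
        · refine ⟨Finset.mem_sdiff.mp hzb, fun hcon => ?_⟩
          obtain ⟨g, hg, hψ⟩ := Finset.mem_image.mp hcon
          rw [← hψ, iota_psi htot hg] at hfix
          have hb := (psi_bundle htot hg).2.1
          omega
        · exfalso
          rw [iota_gamma hzg] at hfix
          have := (psi_bundle htot hzg).2.1
          omega
      · rintro ⟨⟨hzβ, hzγ⟩, hnim⟩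
        have hzZ : z ∈ (β ∪ γ) \ (β ∩ γ) :=
          (hZmem z).mpr (Or.inl (Finset.mem_sdiff.mpr ⟨hzβ, hzγ⟩))
        refine ⟨Finset.mem_sdiff.mp hzZ, iota_fixed (fun hc => (Finset.mem_sdiff.mp hc).2 hzβ) ?_⟩
        rintro ⟨g, hg, hψ⟩
        exact hnim (Finset.mem_image.mpr ⟨g, hg, hψ⟩)
    rw [hFeq, Finset.card_sdiff_of_subset hIsub, hIcard]
    have e1 := Finset.card_inter_add_card_sdiff β γ
    have e2 := Finset.card_inter_add_card_sdiff γ β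
    have e3 : (β ∩ γ).card = (γ ∩ β).card := by rw [Finset.inter_comm]
    omega
  have hnested : ∀ z ∈ (β ∪ γ) \ (β ∩ γ), z < iotaS β γ z →
      ∀ x ∈ (β ∪ γ) \ (β ∩ γ), z < x → x < iotaS β γ z →
        z < iotaS β γ x ∧ iotaS β γ x < iotaS β γ z ∧ iotaS β γ x ≠ x := by
    intro z hzZ hzlt x hxZ h1 h2
    have hzβγ : z ∈ β \ γ := by
      rcases (hZmem z).mp hzZ with h | h
      · exact h
      · exfalso
        have := (psi_bundle htot h).2.1
        rw [iota_gamma h] at hzlt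
        omega
    have hex : ∃ g ∈ γ \ β, psiS β γ g = z := by
      by_contra hcon
      rw [iota_fixed (fun hc => (Finset.mem_sdiff.mp hc).2 (Finset.mem_sdiff.mp hzβγ).1) hcon]
        at hzlt
      omega
    obtain ⟨g, hgmem, hgψ⟩ := hex
    have hιz : iotaS β γ z = g := by rw [← hgψ, iota_psi htot hgmem]
    obtain ⟨_, hψlt, lg, hglev, hψeq⟩ := psi_bundle htot hgmem
    rw [hιz] at hzlt h2 ⊢
    rcases (hZmem x).mp hxZ with hxb | hxg
    · -- x ∈ β \ γ : x is the ψ-image of some g₂ with x < g₂ < g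
      obtain ⟨hxβ, hxγ⟩ := Finset.mem_sdiff.mp hxb
      obtain ⟨g2, s₀, hg2lev, hxeq, hg2lt⟩ := inner_beta (x := x) hglev hxβ hxγ
        (by push_cast; rw [hgψ] at hψeq; omega) h2
      have hg2mem : g2 ∈ γ \ β := (mem_gammaL_pos_props hg2lev).1
      have hψg2 : psiS β γ g2 = x := by
        rw [psiS_eq_of_mem hg2lev]; push_cast; omega
      have hιx : iotaS β γ x = g2 := by rw [← hψg2, iota_psi htot hg2mem]
      rw [hιx]
      refine ⟨by omega, by omega, by omega⟩
    · -- x ∈ γ \ β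
      obtain ⟨hψx, hψxlt, lx, hxlev, hψxeq⟩ := psi_bundle htot hxg
      rw [iota_gamma hxg]
      refine ⟨?_, by omega, by omega⟩
      by_contra hle
      push_neg at hle
      rcases eq_or_lt_of_le hle with heq | hlt
      · have : x = g := psi_inj_gamma htot (Finset.mem_sdiff.mp hxg).1
          (Finset.mem_sdiff.mp hgmem).1 (by rw [heq, hgψ])
        omega
      · exact no_crossing (l1 := lx + 1) (l2 := lg + 1) hxlev hglev h2
          (by push_cast; rw [hgψ] at hψeq; omega) (by push_cast; rw [hgψ] at hψeq; omega)
  refine ⟨?_, ?_, iotaS β γ, ?_, ?_, hinv, hcount, admissible_of_nested r _ _ hinv hcount hnested⟩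
  · -- conjunct 1
    intro p hp
    obtain ⟨h1, _, h3, _⟩ := hpairmem p hp
    exact ⟨(hZmem p.1).mpr (Or.inr h1), (hZmem p.2).mpr (Or.inl h3)⟩
  · -- conjunct 2
    intro p hp q hq hne
    obtain ⟨j, hj, rfl⟩ := Finset.mem_image.mp hp
    obtain ⟨j', hj', rfl⟩ := Finset.mem_image.mp hq
    obtain ⟨hjγ, hjne⟩ := Finset.mem_filter.mp hj
    obtain ⟨hjγ', hjne'⟩ := Finset.mem_filter.mp hj'
    have hjj : j ≠ j' := fun hcon => hne (by rw [hcon])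
    have hm1 := hrep j hjγ hjne
    have hm2 := hrep j' hjγ' hjne'
    have hb1 := (psi_bundle htot hm1).1
    have hb2 := (psi_bundle htot hm2).1
    refine ⟨hjj, fun hcon => ?_, fun hcon => ?_, fun hcon => ?_⟩
    · have hcon' : j = psiS β γ j' := hcon
      exact (Finset.mem_sdiff.mp hm1).2 ((Finset.mem_sdiff.mp (hcon' ▸ hb2)).1)
    · have hcon' : psiS β γ j = j' := hcon
      exact (Finset.mem_sdiff.mp hm2).2 ((Finset.mem_sdiff.mp (hcon' ▸ hb1)).1)
    · have hcon' : psiS β γ j = psiS β γ j' := hcon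
      exact hjj (psi_inj_gamma htot hjγ hjγ' hcon')
  · -- conjunct 3: ι on pairs
    intro p hp
    obtain ⟨h1, h2, _, _⟩ := hpairmem p hp
    constructor
    · rw [iota_gamma h1, h2]
    · rw [h2, iota_psi htot h1]
  · -- conjunct 4: ι fixed on unpaired
    intro z hzZ hzp
    rcases (hZmem z).mp hzZ with hzb | hzg
    · have hznγ : z ∉ γ \ β := fun hc => (Finset.mem_sdiff.mp hc).2 (Finset.mem_sdiff.mp hzb).1
      refine iota_fixed hznγ ?_
      rintro ⟨g, hg, hψ⟩
      exact (hzp (g, psiS β γ g) (hγβpair g hg)).2 hψ.symm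
    · exact absurd rfl (hzp (z, psiS β γ z) (hγβpair z hzg)).1


end LM2003
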